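/- Conversely, for convex f₁, f₂ on a convex set C ⊆ ℝ^n, every Pareto-optimal point x of (f₁, f₂) minimizes λf₁ + (1−λ)f₂ over C for some λ ∈ [0,1]. -/

import Mathlib

/-- For convex `f₁, f₂` on a convex set `C ⊆ ℝ^n`, every Pareto-optimal
point `x` of `(f₁, f₂)` minimizes some scalarization `λ f₁ + (1-λ) f₂`, `λ ∈ [0,1]`,
over `C`. -/
theorem pareto_scalarization (n : ℕ) (C : Set (Fin n → ℝ)) (hC : Convex ℝ C)
    (f₁ f₂ : (Fin n → ℝ) → ℝ)
    (hf₁ : ConvexOn ℝ C f₁) (hf₂ : ConvexOn ℝ C f₂)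
    (x : Fin n → ℝ) (hx : x ∈ C)
    (hpareto : ¬ ∃ y ∈ C, f₁ y ≤ f₁ x ∧ f₂ y ≤ f₂ x ∧ (f₁ y < f₁ x ∨ f₂ y < f₂ x)) :
    ∃ l : ℝ, 0 ≤ l ∧ l ≤ 1 ∧
      ∀ y ∈ C, l * f₁ x + (1 - l) * f₂ x ≤ l * f₁ y + (1 - l) * f₂ y := by
  classical
  push_neg at hpareto
  set A : Set (ℝ × ℝ) := {p | ∃ y ∈ C, f₁ y - f₁ x ≤ p.1 ∧ f₂ y - f₂ x ≤ p.2} with hAdef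
  set O : Set (ℝ × ℝ) := {p | p.1 < 0 ∧ p.2 < 0} with hOdef
  have hAconv : Convex ℝ A := by
    rintro p ⟨y₁, hy₁, h11, h12⟩ q ⟨y₂, hy₂, h21, h22⟩ a b ha hb hab
    refine ⟨a • y₁ + b • y₂, hC hy₁ hy₂ ha hb hab, ?_, ?_⟩
    · have h := hf₁.2 hy₁ hy₂ ha hb hab
      simp only [smul_eq_mul, Prod.fst_add, Prod.smul_fst] at *
      have hxx : a * f₁ x + b * f₁ x = f₁ x := by rw [← add_mul, hab, one_mul]
      nlinarith [mul_le_mul_of_nonneg_left h11 ha, mul_le_mul_of_nonneg_left h21 hb]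
    · have h := hf₂.2 hy₁ hy₂ ha hb hab
      simp only [smul_eq_mul, Prod.snd_add, Prod.smul_snd] at *
      have hxx : a * f₂ x + b * f₂ x = f₂ x := by rw [← add_mul, hab, one_mul]
      nlinarith [mul_le_mul_of_nonneg_left h12 ha, mul_le_mul_of_nonneg_left h22 hb]
  have hOconv : Convex ℝ O := by
    rintro p ⟨hp1, hp2⟩ q ⟨hq1, hq2⟩ a b ha hb hab
    constructor
    · simp only [Prod.fst_add, Prod.smul_fst, smul_eq_mul]
      rcases eq_or_lt_of_le ha with h | h
      · simp [← h] at hab ⊢; nlinarith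
      · nlinarith
    · simp only [Prod.snd_add, Prod.smul_snd, smul_eq_mul]
      rcases eq_or_lt_of_le ha with h | h
      · simp [← h] at hab ⊢; nlinarith
      · nlinarith
  have hOopen : IsOpen O := by
    have : O = (Prod.fst ⁻¹' Set.Iio (0:ℝ)) ∩ (Prod.snd ⁻¹' Set.Iio (0:ℝ)) := by
      ext p; simp [hOdef, Set.mem_setOf_eq]
    rw [this]
    exact (isOpen_Iio.preimage continuous_fst).inter (isOpen_Iio.preimage continuous_snd)
  have hdisj : Disjoint O A := by
    rw [Set.disjoint_left]
    rintro p ⟨hp1, hp2⟩ ⟨y, hy, h1, h2⟩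
    have hlt1 : f₁ y < f₁ x := by linarith
    have hlt2 : f₂ y < f₂ x := by linarith
    exact absurd hlt1 (not_lt.2 (hpareto y hy hlt1.le hlt2.le).1)
  obtain ⟨g, u, hgO, hgA⟩ := geometric_hahn_banach_open hOconv hOopen hAconv hdisj
  set l₁ : ℝ := g (1, 0) with hl₁
  set l₂ : ℝ := g (0, 1) with hl₂
  have key : ∀ p : ℝ × ℝ, g p = p.1 * l₁ + p.2 * l₂ := by
    intro p
    have hp : p = p.1 • ((1:ℝ), (0:ℝ)) + p.2 • ((0:ℝ), (1:ℝ)) := by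
      ext <;> simp
    rw [hl₁, hl₂]
    conv_lhs => rw [hp]
    rw [map_add, map_smul, map_smul]
    simp [smul_eq_mul]
  have hzeroA : (0 : ℝ × ℝ) ∈ A := ⟨x, hx, by simp, by simp⟩
  have hu0 : u ≤ 0 := by simpa using hgA 0 hzeroA
  have hu0' : 0 ≤ u := by
    by_contra h
    push_neg at h
    have h1 := hgO (-1, -1) ⟨by norm_num, by norm_num⟩
    rw [key] at h1
    norm_num at h1
    -- h1 : -l₁ + -l₂ < u  (roughly)
    have hs : 0 < l₁ + l₂ := by nlinarith
    set ε : ℝ := -u / (2 * (l₁ + l₂)) with hεdef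
    have hεpos : 0 < ε := div_pos (by linarith) (by linarith)
    have h2 := hgO (-ε, -ε) ⟨neg_lt_zero.mpr hεpos, neg_lt_zero.mpr hεpos⟩
    rw [key] at h2
    simp only at h2
    have hexp : -ε * l₁ + -ε * l₂ = u / 2 := by
      rw [hεdef]; field_simp
    linarith
  have hu : u = 0 := le_antisymm hu0 hu0'
  have hOneg : ∀ p ∈ O, p.1 * l₁ + p.2 * l₂ < 0 := by
    intro p hp
    have := hgO p hp
    rw [key p, hu] at this
    exact this
  have hl₁nn : 0 ≤ l₁ := by
    by_contra h
    push_neg at h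
    have hmem : ((-(|l₂| + 1) / (-l₁), (-1:ℝ)) : ℝ × ℝ) ∈ O := by
      refine ⟨?_, by norm_num⟩
      show -(|l₂| + 1) / (-l₁) < 0
      rw [neg_div_neg_eq]
      exact div_neg_of_pos_of_neg (by positivity) h
    have := hOneg _ hmem
    simp only at this
    have h1 : -(|l₂| + 1) / (-l₁) * l₁ = |l₂| + 1 := by
      rw [neg_div_neg_eq, div_mul_cancel₀ _ h.ne]
    rw [h1] at this
    have := abs_nonneg l₂
    have := le_abs_self l₂
    linarith
  have hl₂nn : 0 ≤ l₂ := by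
    by_contra h
    push_neg at h
    have hmem : (((-1:ℝ), -(|l₁| + 1) / (-l₂)) : ℝ × ℝ) ∈ O := by
      refine ⟨by norm_num, ?_⟩
      show -(|l₁| + 1) / (-l₂) < 0
      rw [neg_div_neg_eq]
      exact div_neg_of_pos_of_neg (by positivity) h
    have := hOneg _ hmem
    simp only at this
    have h1 : -(|l₁| + 1) / (-l₂) * l₂ = |l₁| + 1 := by
      rw [neg_div_neg_eq, div_mul_cancel₀ _ h.ne]
    rw [h1] at this
    have := abs_nonneg l₁
    have := le_abs_self l₁
    linarith
  have hsum : 0 < l₁ + l₂ := by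
    by_contra h
    push_neg at h
    have h1 : l₁ = 0 := by linarith
    have h2 : l₂ = 0 := by linarith
    have := hOneg (-1, -1) ⟨by norm_num, by norm_num⟩
    rw [show ((-1:ℝ), (-1:ℝ)).1 = (-1:ℝ) from rfl, show ((-1:ℝ), (-1:ℝ)).2 = (-1:ℝ) from rfl,
      h1, h2] at this
    norm_num at this
  refine ⟨l₁ / (l₁ + l₂), div_nonneg hl₁nn hsum.le, by
    rw [div_le_one hsum]; linarith, ?_⟩
  intro y hy
  have hyA : ((f₁ y - f₁ x, f₂ y - f₂ x) : ℝ × ℝ) ∈ A := ⟨y, hy, le_refl _, le_refl _⟩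
  have hkey := hgA _ hyA
  rw [key, hu] at hkey
  simp only at hkey
  have hs : l₁ + l₂ ≠ 0 := hsum.ne'
  have hrest : 1 - l₁ / (l₁ + l₂) = l₂ / (l₁ + l₂) := by field_simp; ring
  rw [hrest]
  rw [div_mul_eq_mul_div, div_mul_eq_mul_div, div_mul_eq_mul_div, div_mul_eq_mul_div,
    ← add_div, ← add_div, div_le_div_iff_of_pos_right hsum]
  nlinarith
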